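/- Let G be a finite symmetry group for the substitution tiling system (𝒫, ω) which acts freely on 𝒫, and fix n ∈ ℕ. If T ∈ Ω_punc, x₁, x₂ ∈ ℝ^d and g₁, g₂ ∈ G satisfy (T, T + x₁) ∈ R_n, (T, T + x₂) ∈ R_n and g₁⁻¹(T + x₁) = g₂⁻¹(T + x₂), then g₁ = g₂ and x₁ = x₂. (Thus each semidirect product R_n ⋊ G, and hence R_AF ⋊ G = ∪_n (R_n ⋊ G), is a principal groupoid.) -/

import Mathlib

open Metric Set Pointwise

noncomputable section

/-- Points of `ℝ^d`. -/
abbrev Pt (d : ℕ) := EuclideanSpace ℝ (Fin d)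

/-- A (possibly labelled) tile in `ℝ^d`: a subset of `ℝ^d` together with a label. -/
structure Tile (d : ℕ) where
  carrier : Set (Pt d)
  label : ℕ

instance {d : ℕ} : Inhabited (Tile d) := ⟨⟨∅, 0⟩⟩

/-- Translate of a tile by a vector. -/
def Tile.translate {d : ℕ} (t : Tile d) (x : Pt d) : Tile d :=
  ⟨(fun y => y + x) '' t.carrier, t.label⟩

/-- A tile proper: homeomorphic to the closed unit ball. -/
def Tile.IsTile {d : ℕ} (t : Tile d) : Prop :=
  Nonempty (t.carrier ≃ₜ (Metric.closedBall (0 : Pt d) 1))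

/-- Support of a partial tiling: the union of its tiles. -/
def psupp {d : ℕ} (P : Set (Tile d)) : Set (Pt d) := ⋃ t ∈ P, t.carrier

/-- `tilesAt P U` = the tiles of `P` meeting `U`, written `P(U)` in the paper. -/
def tilesAt {d : ℕ} (P : Set (Tile d)) (U : Set (Pt d)) : Set (Tile d) :=
  {t ∈ P | (t.carrier ∩ U).Nonempty}

/-- Translate of a collection of tiles. -/
def translateSet {d : ℕ} (P : Set (Tile d)) (x : Pt d) : Set (Tile d) :=
  (fun t => t.translate x) '' P

/-- A partial tiling: tiles with pairwise disjoint interiors. -/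
def IsPartialTiling {d : ℕ} (P : Set (Tile d)) : Prop :=
  (∀ t ∈ P, t.IsTile) ∧
  ∀ t ∈ P, ∀ t' ∈ P, t ≠ t' → interior t.carrier ∩ interior t'.carrier = ∅

/-- A patch: a finite partial tiling. -/
def IsPatch {d : ℕ} (P : Set (Tile d)) : Prop := IsPartialTiling P ∧ P.Finite

/-- A tiling of all of `ℝ^d`. -/
def IsTilingOfSpace {d : ℕ} (P : Set (Tile d)) : Prop :=
  IsPartialTiling P ∧ psupp P = univ

/-- A substitution tiling system `(𝒫, ω)` with inflation constant `λ > 1`. -/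
structure SubstSystem (d : ℕ) where
  proto : Set (Tile d)
  proto_finite : proto.Finite
  proto_nonempty : proto.Nonempty
  proto_isTile : ∀ p ∈ proto, p.IsTile
  proto_zero_mem : ∀ p ∈ proto, (0 : Pt d) ∈ interior p.carrier
  proto_no_translate : ∀ p ∈ proto, ∀ q ∈ proto, ∀ x : Pt d,
    q = p.translate x → p = q ∧ x = 0
  lam : ℝ
  one_lt_lam : 1 < lam
  sub : Tile d → Set (Tile d)
  sub_patch : ∀ p ∈ proto, IsPatch (sub p)
  sub_proto : ∀ p ∈ proto, ∀ t ∈ sub p, ∃ q ∈ proto, ∃ x : Pt d, t = q.translate x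
  sub_supp : ∀ p ∈ proto, psupp (sub p) = lam • p.carrier
  sub_translate : ∀ (t : Tile d) (x : Pt d),
    sub (t.translate x) = (fun s => s.translate (lam • x)) '' sub t

namespace SubstSystem

variable {d : ℕ} (S : SubstSystem d)

/-- Tile-wise application of the substitution to a collection of tiles. -/
def subSet (P : Set (Tile d)) : Set (Tile d) := ⋃ t ∈ P, S.sub t

/-- Iterated substitution `ω^n` on collections of tiles. -/
def subIter (n : ℕ) (P : Set (Tile d)) : Set (Tile d) := (S.subSet)^[n] P

/-- `ω^n(t)` for a single tile `t`. -/
def omegan (n : ℕ) (t : Tile d) : Set (Tile d) := S.subIter n {t}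

/-- The continuous hull `Ω`. -/
def Omega : Set (Set (Tile d)) :=
  {T | IsTilingOfSpace T ∧ ∀ P : Set (Tile d), P ⊆ T → IsPatch P →
    ∃ n : ℕ, ∃ p ∈ S.proto, ∃ x : Pt d, P ⊆ translateSet (S.omegan n p) x}

/-- `x` is the puncture of the tile `t`, i.e. `t = p + x` for a prototile `p`. -/
def IsPuncture (t : Tile d) (x : Pt d) : Prop :=
  ∃ p ∈ S.proto, t = p.translate x

open Classical in
/-- The puncture `x(t)` of a tile `t` (chosen; unique for translates of prototiles). -/
def punc (t : Tile d) : Pt d :=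
  if h : ∃ x : Pt d, S.IsPuncture t x then h.choose else 0

/-- The punctured hull (transversal) `Ω_punc`. -/
def OmegaPunc : Set (Set (Tile d)) :=
  {T ∈ S.Omega | ∃ t ∈ T, S.IsPuncture t 0}

end SubstSystem

/-- The tiling metric. -/
def tilingDist {d : ℕ} (T T' : Set (Tile d)) : ℝ :=
  sInf ({1} ∪ {ε : ℝ | 0 < ε ∧ ∃ x x' : Pt d, ‖x‖ < ε ∧ ‖x'‖ < ε ∧
    tilesAt (translateSet T (-x)) (ball (0 : Pt d) (1 / ε)) =
      tilesAt (translateSet T' (-x')) (ball (0 : Pt d) (1 / ε))})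

namespace SubstSystem

variable {d : ℕ} (S : SubstSystem d)

/-- Density of a family of tilings in `Ω_punc` w.r.t. the tiling metric. -/
def DenseInPunc (E : Set (Set (Tile d))) : Prop :=
  ∀ T ∈ S.OmegaPunc, ∀ ε : ℝ, 0 < ε → ∃ T' ∈ E, tilingDist T T' < ε

/-- Openness of a subset of `Ω_punc` w.r.t. the tiling metric (subspace topology). -/
def OpenInPunc (E : Set (Set (Tile d))) : Prop :=
  E ⊆ S.OmegaPunc ∧ ∀ T ∈ E, ∃ ε : ℝ, 0 < ε ∧
    ∀ T' ∈ S.OmegaPunc, tilingDist T T' < ε → T' ∈ E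

/-- The translational equivalence relation `R_punc` on `Ω_punc`. -/
def Rpunc : Set (Set (Tile d) × Set (Tile d)) :=
  {TT | TT.1 ∈ S.OmegaPunc ∧ TT.2 ∈ S.OmegaPunc ∧ ∃ x : Pt d, TT.2 = translateSet TT.1 x}

/-- `Punc(n, p)`: the punctures of the tiles of `ω^n(p)`. -/
def Punc (n : ℕ) (p : Tile d) : Set (Pt d) :=
  {x | ∃ t ∈ S.omegan n p, S.IsPuncture t x}

/-- `E^n_p(x, y)`. -/
def Eset (n : ℕ) (p : Tile d) (x y : Pt d) : Set (Set (Tile d) × Set (Tile d)) :=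
  {TT | ∃ T ∈ S.OmegaPunc, p ∈ T ∧
    TT.1 = translateSet (S.subIter n T) (-x) ∧ TT.2 = translateSet (S.subIter n T) (-y)}

/-- `R_n`. -/
def Rn (n : ℕ) : Set (Set (Tile d) × Set (Tile d)) :=
  ⋃ p ∈ S.proto, ⋃ x ∈ S.Punc n p, ⋃ y ∈ S.Punc n p, S.Eset n p x y

/-- `R_AF = ∪ₙ R_n`. -/
def RAF : Set (Set (Tile d) × Set (Tile d)) := ⋃ n : ℕ, S.Rn n

/-- `U(P, t)`. -/
def Uset (P : Set (Tile d)) (t : Tile d) : Set (Set (Tile d)) :=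
  {T ∈ S.OmegaPunc | translateSet P (-(S.punc t)) ⊆ T}

/-- `V(P, t₁, t₂)`. -/
def Vset (P : Set (Tile d)) (t₁ t₂ : Tile d) : Set (Set (Tile d) × Set (Tile d)) :=
  {TT | TT.1 ∈ S.Uset P t₁ ∧ TT.2 = translateSet TT.1 (S.punc t₁ - S.punc t₂)}

/-- (A1) primitivity. -/
def Primitive : Prop :=
  ∃ N : ℕ, ∀ p ∈ S.proto, ∀ q ∈ S.proto, ∃ x : Pt d, Tile.translate q x ∈ S.omegan N p

/-- (A2) finite local complexity. -/
def FLC : Prop :=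
  ∀ R : ℝ, 0 < R → ∃ Ps : Set (Set (Tile d)), Ps.Finite ∧
    ∀ P : Set (Tile d), IsPatch P → Metric.diam (psupp P) < R →
      (∃ T ∈ S.Omega, P ⊆ T) → ∃ P₀ ∈ Ps, ∃ x : Pt d, P = translateSet P₀ x

/-- (A3) `ω : Ω → Ω` is bijective. -/
def SubBijective : Prop := Set.BijOn S.subSet S.Omega S.Omega

/-- (A4) `ω` forces its border. -/
def ForcesBorder : Prop :=
  ∃ n : ℕ, ∀ p ∈ S.proto, ∀ T ∈ S.Omega, ∀ T' ∈ S.Omega, ∀ x x' : Pt d,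
    translateSet (S.omegan n p) x ⊆ T → translateSet (S.omegan n p) x' ⊆ T' →
    translateSet (tilesAt T ((fun y => y + x) '' psupp (S.omegan n p))) (-x) =
      translateSet (tilesAt T' ((fun y => y + x') '' psupp (S.omegan n p))) (-x')

/-- Prototile boundaries have box-counting dimension strictly less than `d`. -/
def SmallBoundary : Prop :=
  ∃ c : ℝ, c < d ∧ ∃ K₀ : ℝ, ∀ p ∈ S.proto, ∀ ε : ℝ, 0 < ε →
    ∃ centers : Finset (Pt d), (centers.card : ℝ) ≤ K₀ * ε ^ (-c) ∧
      frontier p.carrier ⊆ ⋃ z ∈ centers, ball z ε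

end SubstSystem

/-- A symmetry group action for `(𝒫, ω)`: `G ≤ O(d, ℝ)` acting on tiles, preserving
the prototile set and commuting with the substitution. -/
structure SymmAction {d : ℕ} (S : SubstSystem d) (G : Subgroup (Pt d ≃ₗᵢ[ℝ] Pt d)) where
  act : G → Tile d → Tile d
  act_carrier : ∀ (g : G) (t : Tile d),
    (act g t).carrier = (g : Pt d ≃ₗᵢ[ℝ] Pt d) '' t.carrier
  act_one : ∀ t : Tile d, act 1 t = t
  act_mul : ∀ (g h : G) (t : Tile d), act (g * h) t = act g (act h t)
  act_proto : ∀ (g : G), ∀ p ∈ S.proto, act g p ∈ S.proto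
  act_translate : ∀ (g : G) (t : Tile d) (x : Pt d),
    act g (t.translate x) = (act g t).translate ((g : Pt d ≃ₗᵢ[ℝ] Pt d) x)
  act_sub : ∀ (g : G), ∀ p ∈ S.proto, S.sub (act g p) = act g '' S.sub p

/-- Action of a group element on a (partial) tiling: `gT = {gt : t ∈ T}`. -/
def SymmAction.actSet {d : ℕ} {S : SubstSystem d} {G : Subgroup (Pt d ≃ₗᵢ[ℝ] Pt d)}
    (σ : SymmAction S G) (g : G) (T : Set (Tile d)) : Set (Tile d) := σ.act g '' T

/-- `G` acts freely on the prototile set. -/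
def SymmAction.FreeOnProto {d : ℕ} {S : SubstSystem d} {G : Subgroup (Pt d ≃ₗᵢ[ℝ] Pt d)}
    (σ : SymmAction S G) : Prop := ∀ g : G, ∀ p ∈ S.proto, σ.act g p = p → g = 1

/-- Composition of relations. -/
def relComp {α : Type*} (R₁ R₂ : Set (α × α)) : Set (α × α) :=
  {q | ∃ z : α, (q.1, z) ∈ R₁ ∧ (z, q.2) ∈ R₂}

/-- Transpose (inverse) of a relation. -/
def relTrans {α : Type*} (R : Set (α × α)) : Set (α × α) := {q | (q.2, q.1) ∈ R}

end


/-! ### Auxiliary lemmas -/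

section AuxLemmas

variable {d : ℕ}

theorem tile_ext {t s : Tile d} (h1 : t.carrier = s.carrier) (h2 : t.label = s.label) : t = s := by
  cases t; cases s; simp_all

@[simp] theorem translate_carrier (t : Tile d) (a : Pt d) :
    (t.translate a).carrier = (fun y => y + a) '' t.carrier := rfl

theorem Tile.translate_translate (t : Tile d) (a b : Pt d) :
    (t.translate a).translate b = t.translate (a + b) := by
  apply tile_ext
  · rw [translate_carrier, translate_carrier, translate_carrier, Set.image_image]
    apply Set.image_congr
    intro y _
    abel
  · rfl

theorem Tile.translate_zero (t : Tile d) : t.translate 0 = t := by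
  apply tile_ext
  · rw [translate_carrier]
    simp
  · rfl

theorem Tile.translate_cancel (t : Tile d) (a : Pt d) : (t.translate a).translate (-a) = t := by
  rw [Tile.translate_translate]
  have h : a + -a = 0 := by abel
  rw [h, Tile.translate_zero]

theorem translateSet_translateSet (P : Set (Tile d)) (a b : Pt d) :
    translateSet (translateSet P a) b = translateSet P (a + b) := by
  unfold translateSet
  rw [Set.image_image]
  exact Set.image_congr fun t _ => Tile.translate_translate t a b

theorem translateSet_zero (P : Set (Tile d)) : translateSet P 0 = P := by
  unfold translateSet
  have h : (fun t : Tile d => t.translate 0) = id := funext Tile.translate_zero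
  rw [h, Set.image_id]

theorem translateSet_mono {P Q : Set (Tile d)} (h : P ⊆ Q) (x : Pt d) :
    translateSet P x ⊆ translateSet Q x := Set.image_mono h

theorem translateSet_singleton (t : Tile d) (a : Pt d) :
    translateSet {t} a = {t.translate a} := Set.image_singleton

theorem proto_eq_of_translate (S : SubstSystem d) {p q : Tile d} (hp : p ∈ S.proto)
    (hq : q ∈ S.proto) {u w : Pt d} (h : p.translate u = q.translate w) : p = q ∧ u = w := by
  have h' := congrArg (fun t => t.translate (-w)) h
  simp only [Tile.translate_translate] at h'
  have hww : w + -w = 0 := by abel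
  rw [hww, Tile.translate_zero] at h'
  obtain ⟨h1, h2⟩ := S.proto_no_translate p hp q hq (u + -w) h'.symm
  refine ⟨h1, ?_⟩
  have h3 : u - w = 0 := by rw [sub_eq_add_neg]; exact h2
  have := sub_eq_zero.mp h3
  exact this

theorem interior_translate (A : Set (Pt d)) (a : Pt d) :
    interior ((fun y => y + a) '' A) = (fun y => y + a) '' interior A := by
  have h1 : (fun y : Pt d => y + a) '' A = (Homeomorph.addRight a) '' A := rfl
  have h2 : (fun y : Pt d => y + a) '' interior A = (Homeomorph.addRight a) '' interior A := rfl
  rw [h1, h2, Homeomorph.image_interior]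

theorem interior_image_isometry (g : Pt d ≃ₗᵢ[ℝ] Pt d) (A : Set (Pt d)) :
    interior (⇑g '' A) = ⇑g '' interior A := by
  have h1 : ⇑g '' A = ⇑g.toHomeomorph '' A := rfl
  have h2 : ⇑g '' interior A = ⇑g.toHomeomorph '' interior A := rfl
  rw [h1, h2, Homeomorph.image_interior]

theorem isTile_translate {t : Tile d} (h : t.IsTile) (a : Pt d) : (t.translate a).IsTile := by
  obtain ⟨e⟩ := h
  have him : t.carrier ≃ₜ ((Homeomorph.addRight a) '' t.carrier) :=
    Homeomorph.image (Homeomorph.addRight a) t.carrier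
  have hc : (t.translate a).carrier = (Homeomorph.addRight a) '' t.carrier := rfl
  refine ⟨?_⟩
  rw [hc]
  exact him.symm.trans e

theorem mem_subSet {S : SubstSystem d} {P : Set (Tile d)} {t : Tile d} :
    t ∈ S.subSet P ↔ ∃ s ∈ P, t ∈ S.sub s := by
  simp [SubstSystem.subSet]

theorem subSet_mono (S : SubstSystem d) {P Q : Set (Tile d)} (h : P ⊆ Q) :
    S.subSet P ⊆ S.subSet Q := by
  intro t ht
  rw [mem_subSet] at ht ⊢
  obtain ⟨s, hs, hts⟩ := ht
  exact ⟨s, h hs, hts⟩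

theorem subIter_zero (S : SubstSystem d) (P : Set (Tile d)) : S.subIter 0 P = P := rfl

theorem subIter_succ (S : SubstSystem d) (n : ℕ) (P : Set (Tile d)) :
    S.subIter (n + 1) P = S.subSet (S.subIter n P) := Function.iterate_succ_apply' _ _ _

theorem subIter_mono (S : SubstSystem d) (n : ℕ) {P Q : Set (Tile d)} (h : P ⊆ Q) :
    S.subIter n P ⊆ S.subIter n Q := by
  induction n with
  | zero => exact h
  | succ n ih => rw [subIter_succ, subIter_succ]; exact subSet_mono S ih

theorem subSet_translateSet (S : SubstSystem d) (P : Set (Tile d)) (z : Pt d) :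
    S.subSet (translateSet P z) = translateSet (S.subSet P) (S.lam • z) := by
  ext t
  constructor
  · intro ht
    rw [mem_subSet] at ht
    obtain ⟨s, hs, hts⟩ := ht
    obtain ⟨u, hu, rfl⟩ := hs
    rw [S.sub_translate] at hts
    obtain ⟨w, hw, rfl⟩ := hts
    exact ⟨w, mem_subSet.mpr ⟨u, hu, hw⟩, rfl⟩
  · intro ht
    obtain ⟨s, hs, rfl⟩ := ht
    rw [mem_subSet] at hs
    obtain ⟨u, hu, hsu⟩ := hs
    rw [mem_subSet]
    refine ⟨u.translate z, ⟨u, hu, rfl⟩, ?_⟩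
    rw [S.sub_translate]
    exact ⟨s, hsu, rfl⟩

theorem subIter_translateSet (S : SubstSystem d) (n : ℕ) (P : Set (Tile d)) (z : Pt d) :
    S.subIter n (translateSet P z) = translateSet (S.subIter n P) (S.lam ^ n • z) := by
  induction n with
  | zero => rw [subIter_zero, subIter_zero, pow_zero, one_smul]
  | succ n ih =>
    rw [subIter_succ, ih, subSet_translateSet, subIter_succ, smul_smul, ← pow_succ']

def ProtoLike (S : SubstSystem d) (P : Set (Tile d)) : Prop :=
  ∀ t ∈ P, ∃ q ∈ S.proto, ∃ z : Pt d, t = q.translate z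

theorem protoLike_singleton (S : SubstSystem d) {q : Tile d} (hq : q ∈ S.proto) (z : Pt d) :
    ProtoLike S {q.translate z} := by
  intro t ht
  rw [Set.mem_singleton_iff] at ht
  exact ⟨q, hq, z, ht⟩

theorem protoLike_singleton' (S : SubstSystem d) {q : Tile d} (hq : q ∈ S.proto) :
    ProtoLike S {q} := by
  have h := protoLike_singleton S hq 0
  rwa [Tile.translate_zero] at h

theorem protoLike_sub (S : SubstSystem d) {q : Tile d} (hq : q ∈ S.proto) (z : Pt d) :
    ProtoLike S (S.sub (q.translate z)) := by
  intro t ht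
  rw [S.sub_translate] at ht
  obtain ⟨s, hs, rfl⟩ := ht
  obtain ⟨r, hr, w, rfl⟩ := S.sub_proto q hq s hs
  refine ⟨r, hr, w + S.lam • z, ?_⟩
  show (r.translate w).translate (S.lam • z) = r.translate (w + S.lam • z)
  exact Tile.translate_translate _ _ _

theorem protoLike_subSet (S : SubstSystem d) {P : Set (Tile d)} (hP : ProtoLike S P) :
    ProtoLike S (S.subSet P) := by
  intro t ht
  rw [mem_subSet] at ht
  obtain ⟨s, hs, hts⟩ := ht
  obtain ⟨q, hq, z, rfl⟩ := hP s hs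
  exact protoLike_sub S hq z t hts

theorem protoLike_subIter (S : SubstSystem d) (n : ℕ) {P : Set (Tile d)} (hP : ProtoLike S P) :
    ProtoLike S (S.subIter n P) := by
  induction n with
  | zero => exact hP
  | succ n ih => rw [subIter_succ]; exact protoLike_subSet S ih

theorem mem_psupp {P : Set (Tile d)} {y : Pt d} : y ∈ psupp P ↔ ∃ t ∈ P, y ∈ t.carrier := by
  simp [psupp]

theorem psupp_singleton (t : Tile d) : psupp ({t} : Set (Tile d)) = t.carrier := by
  simp [psupp]

theorem psupp_translateSet (P : Set (Tile d)) (z : Pt d) :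
    psupp (translateSet P z) = (fun y => y + z) '' psupp P := by
  ext y
  simp only [mem_psupp, Set.mem_image]
  constructor
  · rintro ⟨t, ⟨s, hs, rfl⟩, hy⟩
    rw [translate_carrier] at hy
    obtain ⟨w, hw, rfl⟩ := hy
    exact ⟨w, ⟨s, hs, hw⟩, rfl⟩
  · rintro ⟨w, ⟨t, ht, hw⟩, rfl⟩
    exact ⟨t.translate z, ⟨t, ht, rfl⟩, ⟨w, hw, rfl⟩⟩

theorem smul_image_translate (c : ℝ) (A : Set (Pt d)) (z : Pt d) :
    c • ((fun y => y + z) '' A) = (fun y => y + c • z) '' (c • A) := by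
  ext y
  rw [Set.mem_smul_set, Set.mem_image]
  constructor
  · rintro ⟨w, ⟨a, ha, rfl⟩, rfl⟩
    refine ⟨c • a, ?_, by rw [smul_add]⟩
    rw [Set.mem_smul_set]
    exact ⟨a, ha, rfl⟩
  · rintro ⟨w, hw, rfl⟩
    rw [Set.mem_smul_set] at hw
    obtain ⟨a, ha, rfl⟩ := hw
    exact ⟨a + z, ⟨a, ha, rfl⟩, by rw [smul_add]⟩

theorem psupp_sub (S : SubstSystem d) {q : Tile d} (hq : q ∈ S.proto) (z : Pt d) :
    psupp (S.sub (q.translate z)) = S.lam • (q.translate z).carrier := by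
  rw [S.sub_translate]
  have h1 : (fun s : Tile d => s.translate (S.lam • z)) '' S.sub q
      = translateSet (S.sub q) (S.lam • z) := rfl
  rw [h1, psupp_translateSet, S.sub_supp q hq, translate_carrier, smul_image_translate]

theorem psupp_subSet (S : SubstSystem d) {P : Set (Tile d)} (hP : ProtoLike S P) :
    psupp (S.subSet P) = S.lam • psupp P := by
  ext y
  constructor
  · intro hy
    rw [mem_psupp] at hy
    obtain ⟨t, ht, hyt⟩ := hy
    rw [mem_subSet] at ht
    obtain ⟨s, hs, hts⟩ := ht
    obtain ⟨q, hq, z, rfl⟩ := hP s hs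
    have hmem : y ∈ psupp (S.sub (q.translate z)) := mem_psupp.mpr ⟨t, hts, hyt⟩
    rw [psupp_sub S hq z, Set.mem_smul_set] at hmem
    obtain ⟨a, ha, rfl⟩ := hmem
    rw [Set.mem_smul_set]
    exact ⟨a, mem_psupp.mpr ⟨_, hs, ha⟩, rfl⟩
  · intro hy
    rw [Set.mem_smul_set] at hy
    obtain ⟨a, ha, rfl⟩ := hy
    rw [mem_psupp] at ha
    obtain ⟨s, hs, has⟩ := ha
    obtain ⟨q, hq, z, rfl⟩ := hP s hs
    have hmem : S.lam • a ∈ psupp (S.sub (q.translate z)) := by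
      rw [psupp_sub S hq z, Set.mem_smul_set]
      exact ⟨a, has, rfl⟩
    rw [mem_psupp] at hmem
    obtain ⟨t, hts, hyt⟩ := hmem
    exact mem_psupp.mpr ⟨t, mem_subSet.mpr ⟨_, hs, hts⟩, hyt⟩

theorem psupp_subIter (S : SubstSystem d) (n : ℕ) {P : Set (Tile d)} (hP : ProtoLike S P) :
    psupp (S.subIter n P) = S.lam ^ n • psupp P := by
  induction n with
  | zero => rw [subIter_zero, pow_zero, one_smul]
  | succ n ih =>
    rw [subIter_succ, psupp_subSet S (protoLike_subIter S n hP), ih, smul_smul, ← pow_succ']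

theorem isPartialTiling_translate {P : Set (Tile d)} (h : IsPartialTiling P) (z : Pt d) :
    IsPartialTiling (translateSet P z) := by
  constructor
  · rintro t ⟨s, hs, rfl⟩
    exact isTile_translate (h.1 s hs) z
  · rintro t ⟨s, hs, rfl⟩ t' ⟨s', hs', rfl⟩ hne
    have hss' : s ≠ s' := by rintro rfl; exact hne rfl
    have hd := h.2 s hs s' hs' hss'
    rw [translate_carrier, translate_carrier, interior_translate, interior_translate,
      ← Set.image_inter (add_left_injective z), hd, Set.image_empty]

theorem isPatch_translate {P : Set (Tile d)} (h : IsPatch P) (z : Pt d) :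
    IsPatch (translateSet P z) :=
  ⟨isPartialTiling_translate h.1 z, h.2.image _⟩

theorem isTilingOfSpace_translate {P : Set (Tile d)} (h : IsTilingOfSpace P) (z : Pt d) :
    IsTilingOfSpace (translateSet P z) := by
  refine ⟨isPartialTiling_translate h.1 z, ?_⟩
  rw [psupp_translateSet, h.2, Set.image_univ]
  exact Set.range_eq_univ.mpr fun y => ⟨y - z, by simp⟩

theorem omega_translate (S : SubstSystem d) {T : Set (Tile d)} (hT : T ∈ S.Omega) (z : Pt d) :
    translateSet T z ∈ S.Omega := by
  obtain ⟨hT1, hT2⟩ := hT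
  refine ⟨isTilingOfSpace_translate hT1 z, ?_⟩
  intro P hPsub hPpatch
  have hsub : translateSet P (-z) ⊆ T := by
    rintro t ⟨s, hs, rfl⟩
    obtain ⟨u, hu, rfl⟩ := hPsub hs
    show (u.translate z).translate (-z) ∈ T
    rw [Tile.translate_cancel]
    exact hu
  obtain ⟨m, q, hq, w, hw⟩ := hT2 _ hsub (isPatch_translate hPpatch (-z))
  refine ⟨m, q, hq, w + z, ?_⟩
  have hPeq : P = translateSet (translateSet P (-z)) z := by
    rw [translateSet_translateSet]
    have h0 : -z + z = 0 := by abel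
    rw [h0, translateSet_zero]
  rw [hPeq]
  calc translateSet (translateSet P (-z)) z
      ⊆ translateSet (translateSet (S.omegan m q) w) z := translateSet_mono hw z
    _ = translateSet (S.omegan m q) (w + z) := translateSet_translateSet _ _ _

theorem protoLike_omega (S : SubstSystem d) {T : Set (Tile d)} (hT : T ∈ S.Omega) :
    ProtoLike S T := by
  intro t ht
  have hTile : t.IsTile := hT.1.1.1 t ht
  have hpatch : IsPatch {t} := by
    refine ⟨⟨?_, ?_⟩, Set.finite_singleton t⟩
    · intro s hs
      rw [Set.mem_singleton_iff] at hs
      rw [hs]; exact hTile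
    · intro s hs s' hs' hne
      rw [Set.mem_singleton_iff] at hs hs'
      exact absurd (hs.trans hs'.symm) hne
  obtain ⟨m, q, hq, z, hsub⟩ := hT.2 {t} (Set.singleton_subset_iff.mpr ht) hpatch
  obtain ⟨s, hs, rfl⟩ := hsub (Set.mem_singleton t)
  obtain ⟨r, hr, w, rfl⟩ := protoLike_subIter S m (protoLike_singleton' S hq) s hs
  refine ⟨r, hr, w + z, ?_⟩
  show (r.translate w).translate z = r.translate (w + z)
  exact Tile.translate_translate _ _ _

theorem subIter_mem_omega (S : SubstSystem d) (hA3 : S.SubBijective) (n : ℕ)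
    {T : Set (Tile d)} (hT : T ∈ S.Omega) : S.subIter n T ∈ S.Omega := by
  induction n with
  | zero => exact hT
  | succ n ih => rw [subIter_succ]; exact hA3.mapsTo ih

theorem subIter_injOn (S : SubstSystem d) (hA3 : S.SubBijective) (n : ℕ)
    {A B : Set (Tile d)} (hA : A ∈ S.Omega) (hB : B ∈ S.Omega)
    (h : S.subIter n A = S.subIter n B) : A = B := by
  induction n with
  | zero => exact h
  | succ n ih =>
    rw [subIter_succ, subIter_succ] at h
    exact ih (hA3.injOn (subIter_mem_omega S hA3 n hA) (subIter_mem_omega S hA3 n hB) h)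

theorem proto_ball (S : SubstSystem d) :
    ∃ δ : ℝ, 0 < δ ∧ ∀ p ∈ S.proto, ball (0 : Pt d) δ ⊆ p.carrier := by
  have hch : ∀ p : Tile d, ∃ ε : ℝ, 0 < ε ∧ (p ∈ S.proto → ball (0 : Pt d) ε ⊆ p.carrier) := by
    intro p
    by_cases hp : p ∈ S.proto
    · have h0 : (0 : Pt d) ∈ interior p.carrier := S.proto_zero_mem p hp
      obtain ⟨ε, hε, hball⟩ := Metric.isOpen_iff.mp isOpen_interior 0 h0
      exact ⟨ε, hε, fun _ => hball.trans interior_subset⟩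
    · exact ⟨1, one_pos, fun h => absurd h hp⟩
  choose f hf1 hf2 using hch
  have hne : S.proto_finite.toFinset.Nonempty := by
    rw [Set.Finite.toFinset_nonempty]; exact S.proto_nonempty
  refine ⟨S.proto_finite.toFinset.inf' hne f, ?_, ?_⟩
  · rw [Finset.lt_inf'_iff]
    exact fun p _ => hf1 p
  · intro p hp
    have hple : S.proto_finite.toFinset.inf' hne f ≤ f p :=
      Finset.inf'_le f (by rw [Set.Finite.mem_toFinset]; exact hp)
    exact (Metric.ball_subset_ball hple).trans (hf2 p hp)

theorem ball_subset_translate {q : Tile d} {δ : ℝ} (h : ball (0 : Pt d) δ ⊆ q.carrier)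
    (z : Pt d) : ball z δ ⊆ (q.translate z).carrier := by
  intro y hy
  rw [translate_carrier]
  refine ⟨y - z, h ?_, by simp⟩
  rw [mem_ball_zero_iff, ← dist_eq_norm]
  exact hy

theorem periodic_small (S : SubstSystem d) {T : Set (Tile d)} (hT : T ∈ S.Omega)
    {δ : ℝ} (hδ : 0 < δ) (hball : ∀ p ∈ S.proto, ball (0 : Pt d) δ ⊆ p.carrier)
    {v : Pt d} (hper : translateSet T v = T) (hsmall : ‖v‖ < 2 * δ) : v = 0 := by
  have h0 : (0 : Pt d) ∈ psupp T := by rw [hT.1.2]; trivial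
  rw [mem_psupp] at h0
  obtain ⟨t, htT, _⟩ := h0
  obtain ⟨q, hq, z, rfl⟩ := protoLike_omega S hT t htT
  have ht' : (q.translate z).translate v ∈ T := by
    rw [← hper]; exact ⟨_, htT, rfl⟩
  rw [Tile.translate_translate] at ht'
  set w : Pt d := z + (2 : ℝ)⁻¹ • v with hw
  have hhalf : (2 : ℝ)⁻¹ * ‖v‖ < δ := by linarith
  have hw1 : w ∈ ball z δ := by
    rw [mem_ball, dist_eq_norm]
    have he : w - z = (2 : ℝ)⁻¹ • v := by rw [hw]; abel
    rw [he, norm_smul, Real.norm_eq_abs, abs_of_pos (by norm_num : (0:ℝ) < 2⁻¹)]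
    exact hhalf
  have hw2 : w ∈ ball (z + v) δ := by
    rw [mem_ball, dist_eq_norm]
    have he : w - (z + v) = ((2 : ℝ)⁻¹ - 1) • v := by
      rw [hw, sub_smul, one_smul]
      abel
    rw [he, norm_smul, Real.norm_eq_abs]
    have habs : |(2:ℝ)⁻¹ - 1| = (2:ℝ)⁻¹ := by norm_num
    rw [habs]
    exact hhalf
  have hb1 : ball z δ ⊆ interior (q.translate z).carrier :=
    interior_maximal (ball_subset_translate (hball q hq) z) isOpen_ball
  have hb2 : ball (z + v) δ ⊆ interior (q.translate (z + v)).carrier :=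
    interior_maximal (ball_subset_translate (hball q hq) (z + v)) isOpen_ball
  have heqt : q.translate (z + v) = q.translate z := by
    by_contra hne
    have hd := hT.1.1.2 _ ht' _ htT hne
    have hmem : w ∈ interior (q.translate (z + v)).carrier ∩ interior (q.translate z).carrier :=
      ⟨hb2 hw2, hb1 hw1⟩
    rw [hd] at hmem
    exact hmem
  have h2 := (proto_eq_of_translate S hq hq heqt).2
  have h3 : z + v = z + 0 := by rw [add_zero]; exact h2
  exact add_left_cancel h3

theorem aperiodic (S : SubstSystem d) (hA3 : S.SubBijective) {T : Set (Tile d)}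
    (hT : T ∈ S.Omega) {u : Pt d} (hper : translateSet T u = T) : u = 0 := by
  obtain ⟨δ, hδ, hball⟩ := proto_ball S
  have hlam0 : (0 : ℝ) < S.lam := lt_trans one_pos S.one_lt_lam
  have key : ∀ k : ℕ, ∃ Tk ∈ S.Omega, translateSet Tk ((S.lam ^ k)⁻¹ • u) = Tk := by
    intro k
    induction k with
    | zero => exact ⟨T, hT, by rw [pow_zero, inv_one, one_smul]; exact hper⟩
    | succ k ih =>
      obtain ⟨Tk, hTk, hTkper⟩ := ih
      obtain ⟨T', hT', hT'eq⟩ := hA3.surjOn hTk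
      refine ⟨T', hT', ?_⟩
      have hmem : translateSet T' ((S.lam ^ (k + 1))⁻¹ • u) ∈ S.Omega := omega_translate S hT' _
      have hsub : S.subSet (translateSet T' ((S.lam ^ (k + 1))⁻¹ • u)) = S.subSet T' := by
        rw [subSet_translateSet, hT'eq, smul_smul]
        have hv : S.lam * (S.lam ^ (k + 1))⁻¹ = (S.lam ^ k)⁻¹ := by
          rw [pow_succ']
          rw [mul_inv]
          rw [← mul_assoc, mul_inv_cancel₀ hlam0.ne', one_mul]
        rw [hv, hTkper]
      exact hA3.injOn hmem hT' hsub
  obtain ⟨k, hk⟩ := pow_unbounded_of_one_lt (‖u‖ / (2 * δ)) S.one_lt_lam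
  obtain ⟨Tk, hTk, hTkper⟩ := key k
  have hpow : (0 : ℝ) < S.lam ^ k := pow_pos hlam0 k
  have h2δ : (0 : ℝ) < 2 * δ := by linarith
  have h1 : ‖u‖ < S.lam ^ k * (2 * δ) := by
    rw [div_lt_iff₀ h2δ] at hk
    linarith
  have hsmall : ‖(S.lam ^ k)⁻¹ • u‖ < 2 * δ := by
    rw [norm_smul, norm_inv, Real.norm_eq_abs, abs_of_pos hpow]
    calc (S.lam ^ k)⁻¹ * ‖u‖ < (S.lam ^ k)⁻¹ * (S.lam ^ k * (2 * δ)) := by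
          apply mul_lt_mul_of_pos_left h1 (inv_pos.mpr hpow)
      _ = 2 * δ := by rw [← mul_assoc, inv_mul_cancel₀ hpow.ne', one_mul]
  have hz := periodic_small S hTk hδ hball hTkper hsmall
  rcases smul_eq_zero.mp hz with h | h
  · exact absurd h (inv_ne_zero hpow.ne')
  · exact h

theorem origin_unique {W : Set (Tile d)} (hW : IsPartialTiling W) {t t' : Tile d}
    (ht : t ∈ W) (ht' : t' ∈ W) (h0 : (0 : Pt d) ∈ interior t.carrier)
    (h0' : (0 : Pt d) ∈ interior t'.carrier) : t = t' := by
  by_contra hne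
  have hd := hW.2 t ht t' ht' hne
  have : (0 : Pt d) ∈ interior t.carrier ∩ interior t'.carrier := ⟨h0, h0'⟩
  rw [hd] at this
  exact this

theorem supertile_unique (S : SubstSystem d) (n : ℕ) {T₀ : Set (Tile d)} (hT₀ : T₀ ∈ S.Omega)
    {t₁ t₂ s : Tile d} (ht₁ : t₁ ∈ T₀) (ht₂ : t₂ ∈ T₀)
    (hs₁ : s ∈ S.subIter n {t₁}) (hs₂ : s ∈ S.subIter n {t₂}) : t₁ = t₂ := by
  by_contra hne
  have hPL := protoLike_omega S hT₀
  obtain ⟨q₁, hq₁, z₁, ht₁eq⟩ := hPL t₁ ht₁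
  obtain ⟨q₂, hq₂, z₂, ht₂eq⟩ := hPL t₂ ht₂
  have hlamn : (0 : ℝ) < S.lam ^ n := pow_pos (lt_trans one_pos S.one_lt_lam) n
  obtain ⟨r, hr, w, hseq⟩ := protoLike_subIter S n
    (by rw [ht₁eq]; exact protoLike_singleton S hq₁ z₁) s hs₁
  have hw : w ∈ interior s.carrier := by
    rw [hseq, translate_carrier, interior_translate]
    exact ⟨0, S.proto_zero_mem r hr, by simp⟩
  have hsubint : ∀ t ∈ T₀, s ∈ S.subIter n {t} → interior s.carrier ⊆ S.lam ^ n • interior t.carrier := by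
    intro t ht hs
    obtain ⟨q, hq, z, hteq⟩ := hPL t ht
    have hcar : s.carrier ⊆ psupp (S.subIter n {t}) := fun y hy => mem_psupp.mpr ⟨_, hs, hy⟩
    have hps : psupp (S.subIter n {t}) = S.lam ^ n • t.carrier := by
      rw [psupp_subIter S n (by rw [hteq]; exact protoLike_singleton S hq z), psupp_singleton]
    rw [hps] at hcar
    calc interior s.carrier ⊆ interior (S.lam ^ n • t.carrier) := interior_mono hcar
      _ = S.lam ^ n • interior t.carrier := interior_smul₀ hlamn.ne' _
  have hm1 := hsubint t₁ ht₁ hs₁ hw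
  have hm2 := hsubint t₂ ht₂ hs₂ hw
  rw [Set.mem_smul_set] at hm1 hm2
  obtain ⟨a₁, ha₁, he₁⟩ := hm1
  obtain ⟨a₂, ha₂, he₂⟩ := hm2
  have haa : a₁ = a₂ := smul_right_injective _ hlamn.ne' (he₁.trans he₂.symm)
  have hd := hT₀.1.1.2 t₁ ht₁ t₂ ht₂ hne
  have : a₁ ∈ interior t₁.carrier ∩ interior t₂.carrier := ⟨ha₁, haa ▸ ha₂⟩
  rw [hd] at this
  exact this

/-! #### Symmetry action lemmas -/

variable {G : Subgroup (Pt d ≃ₗᵢ[ℝ] Pt d)}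

theorem act_inv_act {S : SubstSystem d} (σ : SymmAction S G) (g : G) (t : Tile d) :
    σ.act g⁻¹ (σ.act g t) = t := by
  rw [← σ.act_mul, inv_mul_cancel, σ.act_one]

theorem actSet_actSet {S : SubstSystem d} (σ : SymmAction S G) (g h : G) (P : Set (Tile d)) :
    σ.actSet g (σ.actSet h P) = σ.actSet (g * h) P := by
  unfold SymmAction.actSet
  rw [Set.image_image]
  exact (Set.image_congr fun t _ => (σ.act_mul g h t)).symm

theorem actSet_one {S : SubstSystem d} (σ : SymmAction S G) (P : Set (Tile d)) :
    σ.actSet 1 P = P := by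
  unfold SymmAction.actSet
  have h : σ.act 1 = id := funext σ.act_one
  rw [h, Set.image_id]

theorem actSet_inv {S : SubstSystem d} (σ : SymmAction S G) (g : G) (P : Set (Tile d)) :
    σ.actSet g⁻¹ (σ.actSet g P) = P := by
  rw [actSet_actSet, inv_mul_cancel, actSet_one]

theorem actSet_mono {S : SubstSystem d} (σ : SymmAction S G) (g : G) {P Q : Set (Tile d)}
    (h : P ⊆ Q) : σ.actSet g P ⊆ σ.actSet g Q := Set.image_mono h

theorem actSet_translateSet {S : SubstSystem d} (σ : SymmAction S G) (g : G) (P : Set (Tile d))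
    (z : Pt d) : σ.actSet g (translateSet P z)
      = translateSet (σ.actSet g P) ((g : Pt d ≃ₗᵢ[ℝ] Pt d) z) := by
  unfold SymmAction.actSet translateSet
  rw [Set.image_image, Set.image_image]
  exact Set.image_congr fun t _ => σ.act_translate g t z

theorem isTile_act {S : SubstSystem d} (σ : SymmAction S G) (g : G) {t : Tile d}
    (h : t.IsTile) : (σ.act g t).IsTile := by
  obtain ⟨e⟩ := h
  have him : t.carrier ≃ₜ ((g : Pt d ≃ₗᵢ[ℝ] Pt d).toHomeomorph '' t.carrier) :=
    Homeomorph.image _ t.carrier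
  have hc : (σ.act g t).carrier = (g : Pt d ≃ₗᵢ[ℝ] Pt d).toHomeomorph '' t.carrier :=
    σ.act_carrier g t
  refine ⟨?_⟩
  rw [hc]
  exact him.symm.trans e

theorem sub_act {S : SubstSystem d} (σ : SymmAction S G) (g : G) {q : Tile d}
    (hq : q ∈ S.proto) (z : Pt d) :
    S.sub (σ.act g (q.translate z)) = σ.act g '' S.sub (q.translate z) := by
  rw [σ.act_translate, S.sub_translate, S.sub_translate, σ.act_sub g q hq,
    Set.image_image, Set.image_image]
  apply Set.image_congr
  intro s _
  rw [σ.act_translate]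
  congr 1
  exact (map_smul (g : Pt d ≃ₗᵢ[ℝ] Pt d) S.lam z).symm

theorem subSet_actSet {S : SubstSystem d} (σ : SymmAction S G) (g : G) {P : Set (Tile d)}
    (hP : ProtoLike S P) : S.subSet (σ.actSet g P) = σ.actSet g (S.subSet P) := by
  ext t
  constructor
  · intro ht
    rw [mem_subSet] at ht
    obtain ⟨s, hs, hts⟩ := ht
    obtain ⟨u, hu, rfl⟩ := hs
    obtain ⟨q, hq, z, rfl⟩ := hP u hu
    rw [sub_act σ g hq z] at hts
    obtain ⟨w, hw, rfl⟩ := hts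
    exact ⟨w, mem_subSet.mpr ⟨_, hu, hw⟩, rfl⟩
  · intro ht
    obtain ⟨w, hw, rfl⟩ := ht
    rw [mem_subSet] at hw
    obtain ⟨u, hu, hwu⟩ := hw
    obtain ⟨q, hq, z, rfl⟩ := hP u hu
    rw [mem_subSet]
    refine ⟨σ.act g (q.translate z), ⟨_, hu, rfl⟩, ?_⟩
    rw [sub_act σ g hq z]
    exact ⟨w, hwu, rfl⟩

theorem subIter_actSet {S : SubstSystem d} (σ : SymmAction S G) (g : G) (n : ℕ)
    {P : Set (Tile d)} (hP : ProtoLike S P) :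
    S.subIter n (σ.actSet g P) = σ.actSet g (S.subIter n P) := by
  induction n with
  | zero => rfl
  | succ n ih =>
    rw [subIter_succ, ih, subSet_actSet σ g (protoLike_subIter S n hP), subIter_succ]

theorem psupp_actSet {S : SubstSystem d} (σ : SymmAction S G) (g : G) (P : Set (Tile d)) :
    psupp (σ.actSet g P) = (g : Pt d ≃ₗᵢ[ℝ] Pt d) '' psupp P := by
  ext y
  simp only [mem_psupp, Set.mem_image]
  constructor
  · rintro ⟨t, ht, hy⟩
    obtain ⟨s, hs, rfl⟩ := ht
    rw [σ.act_carrier] at hy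
    obtain ⟨a, ha, rfl⟩ := hy
    exact ⟨a, ⟨s, hs, ha⟩, rfl⟩
  · rintro ⟨a, ⟨s, hs, ha⟩, rfl⟩
    refine ⟨σ.act g s, ⟨s, hs, rfl⟩, ?_⟩
    rw [σ.act_carrier]
    exact ⟨a, ha, rfl⟩

theorem isPartialTiling_act {S : SubstSystem d} (σ : SymmAction S G) (g : G)
    {P : Set (Tile d)} (h : IsPartialTiling P) : IsPartialTiling (σ.actSet g P) := by
  constructor
  · rintro t ⟨s, hs, rfl⟩
    exact isTile_act σ g (h.1 s hs)
  · rintro t ⟨s, hs, rfl⟩ t' ⟨s', hs', rfl⟩ hne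
    have hss' : s ≠ s' := by rintro rfl; exact hne rfl
    have hd := h.2 s hs s' hs' hss'
    rw [σ.act_carrier, σ.act_carrier, interior_image_isometry, interior_image_isometry,
      ← Set.image_inter (g : Pt d ≃ₗᵢ[ℝ] Pt d).injective, hd, Set.image_empty]

theorem isPatch_act {S : SubstSystem d} (σ : SymmAction S G) (g : G) {P : Set (Tile d)}
    (h : IsPatch P) : IsPatch (σ.actSet g P) :=
  ⟨isPartialTiling_act σ g h.1, h.2.image _⟩

theorem omega_act {S : SubstSystem d} (σ : SymmAction S G) (g : G) {T : Set (Tile d)}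
    (hT : T ∈ S.Omega) : σ.actSet g T ∈ S.Omega := by
  refine ⟨⟨isPartialTiling_act σ g hT.1.1, ?_⟩, ?_⟩
  · rw [psupp_actSet, hT.1.2, Set.image_univ]
    exact Set.range_eq_univ.mpr (g : Pt d ≃ₗᵢ[ℝ] Pt d).surjective
  · intro P hPsub hPpatch
    have hsub : σ.actSet g⁻¹ P ⊆ T := by
      have h1 := actSet_mono σ g⁻¹ hPsub
      rwa [actSet_inv] at h1
    obtain ⟨m, q, hq, w, hw⟩ := hT.2 _ hsub (isPatch_act σ g⁻¹ hPpatch)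
    refine ⟨m, σ.act g q, σ.act_proto g q hq, (g : Pt d ≃ₗᵢ[ℝ] Pt d) w, ?_⟩
    have hP : P = σ.actSet g (σ.actSet g⁻¹ P) := by
      rw [actSet_actSet, mul_inv_cancel, actSet_one]
    rw [hP]
    have h1 := actSet_mono σ g hw
    rw [actSet_translateSet] at h1
    have homg : σ.actSet g (S.omegan m q) = S.omegan m (σ.act g q) := by
      show σ.actSet g (S.subIter m {q}) = S.subIter m {σ.act g q}
      rw [← subIter_actSet σ g m (protoLike_singleton' S hq)]
      have hsing : σ.actSet g ({q} : Set (Tile d)) = {σ.act g q} := Set.image_singleton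
      rw [hsing]
    rw [homg] at h1
    exact h1

/-! #### The key rigidity lemma -/

theorem key_lemma (S : SubstSystem d) (hA3 : S.SubBijective) (n : ℕ)
    {T₀ T₁ : Set (Tile d)} (hT₀ : T₀ ∈ S.Omega) (hT₁ : T₁ ∈ S.Omega)
    {p r : Tile d} (hp : p ∈ S.proto) (hpT : p ∈ T₀) (hr : r ∈ S.proto) (hrT : r ∈ T₁)
    {c c' : Pt d} {qc qc' : Tile d} (hqc : qc ∈ S.proto) (hqc' : qc' ∈ S.proto)
    (htc : qc.translate c ∈ S.subIter n {p}) (htc' : qc'.translate c' ∈ S.subIter n {r})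
    (hW : translateSet (S.subIter n T₀) (-c) = translateSet (S.subIter n T₁) (-c')) :
    p = r ∧ c = c' ∧ T₀ = T₁ := by
  have hlam : (0 : ℝ) < S.lam ^ n := pow_pos (lt_trans one_pos S.one_lt_lam) n
  set v : Pt d := (S.lam ^ n)⁻¹ • (c' - c) with hv
  have h1 : S.subIter n (translateSet T₀ v) = S.subIter n T₁ := by
    rw [subIter_translateSet]
    have hsm : S.lam ^ n • v = c' - c := by
      rw [hv, smul_smul, mul_inv_cancel₀ hlam.ne', one_smul]
    rw [hsm]
    have h2 := congrArg (fun Q => translateSet Q c') hW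
    rw [translateSet_translateSet, translateSet_translateSet] at h2
    have e1 : -c + c' = c' - c := by abel
    have e2 : -c' + c' = 0 := by abel
    rw [e1, e2, translateSet_zero] at h2
    exact h2
  have hT₀v : translateSet T₀ v ∈ S.Omega := omega_translate S hT₀ v
  have hT₁eq : translateSet T₀ v = T₁ := subIter_injOn S hA3 n hT₀v hT₁ h1
  have hWpt : IsPartialTiling (translateSet (S.subIter n T₀) (-c)) :=
    (omega_translate S (subIter_mem_omega S hA3 n hT₀) (-c)).1.1
  have hqcW : qc ∈ translateSet (S.subIter n T₀) (-c) := by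
    have h' : qc.translate c ∈ S.subIter n T₀ :=
      subIter_mono S n (Set.singleton_subset_iff.mpr hpT) htc
    have hmem : (qc.translate c).translate (-c) ∈ translateSet (S.subIter n T₀) (-c) :=
      ⟨_, h', rfl⟩
    rwa [Tile.translate_cancel] at hmem
  have hqc'W : qc' ∈ translateSet (S.subIter n T₀) (-c) := by
    rw [hW]
    have h' : qc'.translate c' ∈ S.subIter n T₁ :=
      subIter_mono S n (Set.singleton_subset_iff.mpr hrT) htc'
    have hmem : (qc'.translate c').translate (-c') ∈ translateSet (S.subIter n T₁) (-c') :=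
      ⟨_, h', rfl⟩
    rwa [Tile.translate_cancel] at hmem
  have hqq : qc = qc' :=
    origin_unique hWpt hqcW hqc'W (S.proto_zero_mem qc hqc) (S.proto_zero_mem qc' hqc')
  have hr'T₀ : r.translate (-v) ∈ T₀ := by
    have hrmem : r ∈ translateSet T₀ v := hT₁eq ▸ hrT
    obtain ⟨t, ht, hteq⟩ := hrmem
    have hteq2 : r.translate (-v) = t := by rw [← hteq, Tile.translate_cancel]
    rw [hteq2]
    exact ht
  have hs2 : qc.translate c ∈ S.subIter n {r.translate (-v)} := by
    have hsingle : ({r.translate (-v)} : Set (Tile d)) = translateSet {r} (-v) :=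
      (translateSet_singleton r (-v)).symm
    rw [hsingle, subIter_translateSet]
    have hsm : S.lam ^ n • (-v) = c - c' := by
      rw [hv, smul_neg, smul_smul, mul_inv_cancel₀ hlam.ne', one_smul]
      abel
    rw [hsm]
    refine ⟨qc'.translate c', htc', ?_⟩
    show (qc'.translate c').translate (c - c') = qc.translate c
    rw [Tile.translate_translate, ← hqq]
    congr 1
    abel
  have hpr' : p = r.translate (-v) := supertile_unique S n hT₀ hpT hr'T₀ htc hs2
  have hrp : r = p.translate v := by
    rw [hpr', Tile.translate_translate]
    have h0 : -v + v = 0 := by abel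
    rw [h0, Tile.translate_zero]
  obtain ⟨hpr, hv0⟩ := S.proto_no_translate p hp r hr v hrp
  have hcc : c = c' := by
    have hz : (S.lam ^ n)⁻¹ • (c' - c) = 0 := hv ▸ hv0
    rcases smul_eq_zero.mp hz with h | h
    · exact absurd h (inv_ne_zero hlam.ne')
    · exact (sub_eq_zero.mp h).symm
  refine ⟨hpr, hcc, ?_⟩
  rw [← hT₁eq, hv0, translateSet_zero]

end AuxLemmas

/-- For a finite symmetry group `G` acting freely on `𝒫` and any `n`,
the semidirect product `R_n ⋊ G` is principal: if `(T, T+x₁), (T, T+x₂) ∈ R_n` and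
`g₁⁻¹(T+x₁) = g₂⁻¹(T+x₂)` then `g₁ = g₂` and `x₁ = x₂`. -/
theorem stmt0 {d : ℕ} (hd : 1 ≤ d) (S : SubstSystem d)
    (hA1 : S.Primitive) (hA2 : S.FLC) (hA3 : S.SubBijective)
    (G : Subgroup (Pt d ≃ₗᵢ[ℝ] Pt d)) [Finite G] (σ : SymmAction S G)
    (hfree : σ.FreeOnProto)
    (n : ℕ) (T : Set (Tile d)) (hT : T ∈ S.OmegaPunc)
    (x₁ x₂ : Pt d) (g₁ g₂ : G)
    (h1 : (T, translateSet T x₁) ∈ S.Rn n)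
    (h2 : (T, translateSet T x₂) ∈ S.Rn n)
    (heq : σ.actSet g₁⁻¹ (translateSet T x₁) = σ.actSet g₂⁻¹ (translateSet T x₂)) :
    g₁ = g₂ ∧ x₁ = x₂ := by
  -- Unpack the two `R_n` memberships.
  simp only [SubstSystem.Rn, Set.mem_iUnion, SubstSystem.Eset, Set.mem_setOf_eq] at h1 h2
  obtain ⟨p, hp, x, hx, y, hy, T₀, hT₀punc, hpT₀, hTeq1, hT'eq⟩ := h1
  obtain ⟨p', hp', x', hx', y', hy', T₀', hT₀'punc, hp'T₀', hTeq2, hT''eq⟩ := h2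
  have hΩT₀ : T₀ ∈ S.Omega := hT₀punc.1
  have hΩT₀' : T₀' ∈ S.Omega := hT₀'punc.1
  -- Unpack the punctures.
  obtain ⟨tx, htx, qx, hqx, htxq⟩ := hx
  obtain ⟨ty, hty, qy, hqy, htyq⟩ := hy
  obtain ⟨tx', htx', qx', hqx', htxq'⟩ := hx'
  obtain ⟨ty', hty', qy', hqy', htyq'⟩ := hy'
  have htxm : qx.translate x ∈ S.subIter n {p} := by rw [← htxq]; exact htx
  have htym : qy.translate y ∈ S.subIter n {p} := by rw [← htyq]; exact hty
  have htxm' : qx'.translate x' ∈ S.subIter n {p'} := by rw [← htxq']; exact htx'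
  have htym' : qy'.translate y' ∈ S.subIter n {p'} := by rw [← htyq']; exact hty'
  -- First application of the key lemma: the supertile decomposition of T is unique.
  have hWeq : translateSet (S.subIter n T₀) (-x) = translateSet (S.subIter n T₀') (-x') :=
    hTeq1.symm.trans hTeq2
  obtain ⟨hpp', hxx', hT₀T₀'⟩ :=
    key_lemma S hA3 n hΩT₀ hΩT₀' hp hpT₀ hp' hp'T₀' hqx hqx' htxm htxm' hWeq
  -- The combined group element.
  have hg : σ.actSet (g₂ * g₁⁻¹) (translateSet T x₁) = translateSet T x₂ := by
    have h := congrArg (σ.actSet g₂) heq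
    rw [actSet_actSet, actSet_actSet, mul_inv_cancel, actSet_one] at h
    exact h
  rw [hT'eq, actSet_translateSet, ← subIter_actSet σ (g₂ * g₁⁻¹) n (protoLike_omega S hΩT₀),
    map_neg] at hg
  -- hg : translateSet (S.subIter n (σ.actSet (g₂ * g₁⁻¹) T₀)) (-(↑(g₂ * g₁⁻¹) y)) = translateSet T x₂
  have hW2 : translateSet (S.subIter n T₀) (-y')
      = translateSet (S.subIter n (σ.actSet (g₂ * g₁⁻¹) T₀))
          (-((g₂ * g₁⁻¹ : G) : Pt d ≃ₗᵢ[ℝ] Pt d) y) := by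
    rw [hg, hT''eq, ← hT₀T₀']
  -- Second application of the key lemma.
  have htym'' : qy'.translate y' ∈ S.subIter n {p} := by rw [hpp']; exact htym'
  have hactp : σ.act (g₂ * g₁⁻¹) p ∈ σ.actSet (g₂ * g₁⁻¹) T₀ := ⟨p, hpT₀, rfl⟩
  have htygm : (σ.act (g₂ * g₁⁻¹) qy).translate (((g₂ * g₁⁻¹ : G) : Pt d ≃ₗᵢ[ℝ] Pt d) y)
      ∈ S.subIter n {σ.act (g₂ * g₁⁻¹) p} := by
    have hmem : σ.act (g₂ * g₁⁻¹) (qy.translate y)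
        ∈ σ.actSet (g₂ * g₁⁻¹) (S.subIter n {p}) := ⟨_, htym, rfl⟩
    rw [σ.act_translate] at hmem
    rw [← subIter_actSet σ (g₂ * g₁⁻¹) n (protoLike_singleton' S hp)] at hmem
    have hset : σ.actSet (g₂ * g₁⁻¹) ({p} : Set (Tile d)) = {σ.act (g₂ * g₁⁻¹) p} :=
      Set.image_singleton
    rwa [hset] at hmem
  obtain ⟨hppg, hyy, _⟩ :=
    key_lemma S hA3 n hΩT₀ (omega_act σ (g₂ * g₁⁻¹) hΩT₀) hp hpT₀
      (σ.act_proto (g₂ * g₁⁻¹) p hp) hactp hqy' (σ.act_proto (g₂ * g₁⁻¹) qy hqy)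
      htym'' htygm hW2
  -- Freeness gives g₂ * g₁⁻¹ = 1.
  have hg1 : g₂ * g₁⁻¹ = 1 := hfree (g₂ * g₁⁻¹) p hp hppg.symm
  have hg12 : g₁ = g₂ := (mul_inv_eq_one.mp hg1).symm
  -- Hence y' = y, so the two translated tilings agree.
  have hyy' : y' = y := by
    rw [hyy, hg1]
    simp
  have hx12 : translateSet T x₁ = translateSet T x₂ := by
    rw [hT'eq, hT''eq, ← hT₀T₀', hyy']
  -- Aperiodicity gives x₁ = x₂.
  have h5 := congrArg (fun Q => translateSet Q (-x₁)) hx12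
  rw [translateSet_translateSet, translateSet_translateSet] at h5
  have e1 : x₁ + -x₁ = 0 := by abel
  rw [e1, translateSet_zero] at h5
  have h6 := aperiodic S hA3 hT.1 h5.symm
  have hxeq : x₂ = x₁ := by
    have h7 : x₂ - x₁ = 0 := by rw [sub_eq_add_neg]; exact h6
    exact sub_eq_zero.mp h7
  exact ⟨hg12, hxeq.symm⟩
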